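/- Let m_1, …, m_N be real polynomials with nonzero leading coefficients d_1, …, d_N and let l_1, …, l_N be nonzero real numbers, and define b_0 = 1/d_1, a_0(z) = (z m_1(z) − 1/l_1)/d_1 and, for 1 ≤ j ≤ N−1, b_j = 1/(l_j² d_j d_{j+1}), a_j(z) = (z m_{j+1}(z) − (1/l_j + 1/l_{j+1}))/d_{j+1}. Then for every j = 1, …, N, the 2j-th convergent u_{2j}/v_{2j} of the generalized Stieltjes fraction with parameters (m_i, l_i) equals (as a rational function in z) the j-th convergent −Q_{n_j}(z)/P_{n_j}(z) of the P-fraction with parameters (a_i, b_i). -/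
import Mathlib

open Polynomial Finset

noncomputable section

lemma stieltjes_aux (N : ℕ) (m : ℕ → Polynomial ℝ) (l d : ℕ → ℝ)
    (hd0 : ∀ j, 1 ≤ j → j ≤ N → d j ≠ 0)
    (hl0 : ∀ j, 1 ≤ j → j ≤ N → l j ≠ 0)
    (b : ℕ → ℝ) (a : ℕ → Polynomial ℝ)
    (hb : ∀ j, 1 ≤ j → j ≤ N - 1 → b j = ((l j) ^ 2 * d j * d (j + 1))⁻¹)
    (ha : ∀ j, 1 ≤ j → j ≤ N - 1 → a j =
      Polynomial.C (d (j + 1))⁻¹ *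
        (Polynomial.X * m (j + 1) - Polynomial.C ((l j)⁻¹ + (l (j + 1))⁻¹)))
    (c : ℕ → ℝ) (hc : ∀ q, c (q + 1) = c q * (-(l (q + 1) * d (q + 1))))
    (W R : ℕ → Polynomial ℝ)
    (hW1 : ∀ j, 1 ≤ j → j ≤ N → W (2 * j + 1) = W (2 * j - 1) + Polynomial.C (l j) * W (2 * j))
    (hW2 : ∀ j, j + 1 ≤ N → W (2 * j + 2) = W (2 * j) - Polynomial.X * m (j + 1) * W (2 * j + 1))
    (hR : ∀ j, j ≤ N - 1 → R (j + 2) = a j * R (j + 1) - Polynomial.C (b j) * R j)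
    (base0 : W 1 = Polynomial.C (c 0) * R 1)
    (base1 : 1 ≤ N → W 3 = Polynomial.C (c 1) * R 2) :
    ∀ j, j ≤ N → W (2 * j + 1) = Polynomial.C (c j) * R (j + 1) := by
  intro j
  induction j using Nat.strong_induction_on with
  | _ j ih =>
    intro hj
    rcases j with _ | j
    · simpa using base0
    rcases j with _ | k
    · simpa using base1 hj
    · have hl1 : l (k + 1) ≠ 0 := hl0 _ (by omega) (by omega)
      have hl2 : l (k + 2) ≠ 0 := hl0 _ (by omega) (by omega)
      have hd1 : d (k + 1) ≠ 0 := hd0 _ (by omega) (by omega)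
      have hd2 : d (k + 2) ≠ 0 := hd0 _ (by omega) (by omega)
      have ih1 : W (2 * k + 3) = Polynomial.C (c (k + 1)) * R (k + 2) :=
        ih (k + 1) (by omega) (by omega)
      have ih0 : W (2 * k + 1) = Polynomial.C (c k) * R (k + 1) :=
        ih k (by omega) (by omega)
      have h1 : W (2 * k + 5) = W (2 * k + 3) + Polynomial.C (l (k + 2)) * W (2 * k + 4) :=
        hW1 (k + 2) (by omega) (by omega)
      have h2 : W (2 * k + 4) = W (2 * k + 2) - Polynomial.X * m (k + 2) * W (2 * k + 3) :=
        hW2 (k + 1) (by omega)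
      have h3 : W (2 * k + 3) = W (2 * k + 1) + Polynomial.C (l (k + 1)) * W (2 * k + 2) :=
        hW1 (k + 1) (by omega) (by omega)
      have hRr : R (k + 3) = a (k + 1) * R (k + 2) - Polynomial.C (b (k + 1)) * R (k + 1) :=
        hR (k + 1) (by omega)
      have hE1 : (Polynomial.C (d (k + 2)) : Polynomial ℝ) * Polynomial.C ((d (k + 2))⁻¹) = 1 := by
        rw [← C_mul, mul_inv_cancel₀ hd2, C_1]
      have hE2 : (Polynomial.C (l (k + 1)) : Polynomial ℝ) * Polynomial.C (l (k + 2)) *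
          Polynomial.C ((l (k + 1))⁻¹ + (l (k + 2))⁻¹) =
          Polynomial.C (l (k + 2)) + Polynomial.C (l (k + 1)) := by
        rw [← C_mul, ← C_mul,
          show l (k + 1) * l (k + 2) * ((l (k + 1))⁻¹ + (l (k + 2))⁻¹) = l (k + 2) + l (k + 1) from
            by field_simp, C_add]
      have haK : Polynomial.C (l (k + 1)) * Polynomial.C (l (k + 2)) * Polynomial.C (d (k + 2)) *
          a (k + 1) = Polynomial.C (l (k + 1)) * Polynomial.C (l (k + 2)) *
            (Polynomial.X * m (k + 2)) - (Polynomial.C (l (k + 2)) + Polynomial.C (l (k + 1))) := by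
        rw [ha (k + 1) (by omega) (by omega)]
        simp only [show k + 1 + 1 = k + 2 from rfl]
        linear_combination (Polynomial.C (l (k + 1)) * Polynomial.C (l (k + 2)) *
          (Polynomial.X * m (k + 2) - Polynomial.C ((l (k + 1))⁻¹ + (l (k + 2))⁻¹))) * hE1 - hE2
      have hbK : Polynomial.C (l (k + 1)) ^ 2 * Polynomial.C (d (k + 1)) *
          Polynomial.C (d (k + 2)) * Polynomial.C (b (k + 1)) = 1 := by
        rw [hb (k + 1) (by omega) (by omega)]
        simp only [show k + 1 + 1 = k + 2 from rfl]
        rw [← C_pow, ← C_mul, ← C_mul, ← C_mul,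
          show l (k + 1) ^ 2 * d (k + 1) * d (k + 2) *
              (l (k + 1) ^ 2 * d (k + 1) * d (k + 2))⁻¹ = 1 from
            mul_inv_cancel₀ (mul_ne_zero (mul_ne_zero (pow_ne_zero 2 hl1) hd1) hd2), C_1]
      show W (2 * k + 5) = Polynomial.C (c (k + 2)) * R (k + 3)
      rw [h1, h2, hRr, ih1]
      rw [ih1, ih0] at h3
      have hc2 : c (k + 2) = c (k + 1) * (-(l (k + 2) * d (k + 2))) := hc (k + 1)
      have hc1 : c (k + 1) = c k * (-(l (k + 1) * d (k + 1))) := hc k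
      rw [hc2]
      rw [hc1] at h3 ⊢
      simp only [C_mul, C_neg] at h3 ⊢
      apply mul_left_cancel₀ (show (Polynomial.C (l (k + 1)) : Polynomial ℝ) ≠ 0 from
        Polynomial.C_ne_zero.mpr hl1)
      linear_combination (-(Polynomial.C (l (k + 2)))) * h3 -
        (Polynomial.C (c k) * Polynomial.C (l (k + 1)) * Polynomial.C (d (k + 1)) * R (k + 2)) * haK +
        (Polynomial.C (c k) * Polynomial.C (l (k + 2)) * R (k + 1)) * hbK

/-- Theorem 5.1: the `2j`-th convergent `u_{2j}/v_{2j}` of the generalized Stieltjes fraction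
with parameters `(m_i, l_i)` equals the `j`-th convergent `-Q_{n_j}/P_{n_j}` of the
`P`-fraction with parameters `(a_i, b_i)`.  Indices are shifted by one:
`U (k+1) = u_k`, `V (k+1) = v_k`, `P (j+1) = P_{n_j}`, `Q (j+1) = Q_{n_j}`. -/
theorem stieltjes_fraction_convergents_eq_Pfraction_convergents
    (N : ℕ) (hN : 1 ≤ N) (m : ℕ → Polynomial ℝ) (l : ℕ → ℝ) (d : ℕ → ℝ)
    (hd : ∀ j, 1 ≤ j → j ≤ N → d j = (m j).leadingCoeff)
    (hd0 : ∀ j, 1 ≤ j → j ≤ N → d j ≠ 0)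
    (hl0 : ∀ j, 1 ≤ j → j ≤ N → l j ≠ 0)
    (b : ℕ → ℝ) (a : ℕ → Polynomial ℝ)
    (hb0 : b 0 = (d 1)⁻¹)
    (ha0 : a 0 = Polynomial.C (d 1)⁻¹ * (Polynomial.X * m 1 - Polynomial.C (l 1)⁻¹))
    (hb : ∀ j, 1 ≤ j → j ≤ N - 1 → b j = ((l j) ^ 2 * d j * d (j + 1))⁻¹)
    (ha : ∀ j, 1 ≤ j → j ≤ N - 1 → a j =
      Polynomial.C (d (j + 1))⁻¹ *
        (Polynomial.X * m (j + 1) - Polynomial.C ((l j)⁻¹ + (l (j + 1))⁻¹)))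
    (U V : ℕ → Polynomial ℝ)
    (hU0 : U 0 = 1) (hU1 : U 1 = 0) (hV0 : V 0 = 0) (hV1 : V 1 = 1)
    (hUrec2 : ∀ j, j + 1 ≤ N → U (2 * j + 2) = U (2 * j) - Polynomial.X * m (j + 1) * U (2 * j + 1))
    (hUrec1 : ∀ j, 1 ≤ j → j ≤ N → U (2 * j + 1) = U (2 * j - 1) + Polynomial.C (l j) * U (2 * j))
    (hVrec2 : ∀ j, j + 1 ≤ N → V (2 * j + 2) = V (2 * j) - Polynomial.X * m (j + 1) * V (2 * j + 1))
    (hVrec1 : ∀ j, 1 ≤ j → j ≤ N → V (2 * j + 1) = V (2 * j - 1) + Polynomial.C (l j) * V (2 * j))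
    (P Q : ℕ → Polynomial ℝ)
    (hP0 : P 0 = 0) (hP1 : P 1 = 1) (hQ0 : Q 0 = -1) (hQ1 : Q 1 = 0)
    (hPrec : ∀ j, j ≤ N - 1 → P (j + 2) = a j * P (j + 1) - Polynomial.C (b j) * P j)
    (hQrec : ∀ j, j ≤ N - 1 → Q (j + 2) = a j * Q (j + 1) - Polynomial.C (b j) * Q j) :
    ∀ j, 1 ≤ j → j ≤ N →
      (algebraMap (Polynomial ℝ) (RatFunc ℝ)) (U (2 * j + 1)) /
          (algebraMap (Polynomial ℝ) (RatFunc ℝ)) (V (2 * j + 1)) =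
        -((algebraMap (Polynomial ℝ) (RatFunc ℝ)) (Q (j + 1)) /
          (algebraMap (Polynomial ℝ) (RatFunc ℝ)) (P (j + 1))) := by
  set c : ℕ → ℝ := fun j => ∏ i ∈ Finset.Icc 1 j, (-(l i * d i)) with hcdef
  have hc : ∀ q, c (q + 1) = c q * (-(l (q + 1) * d (q + 1))) := by
    intro q
    simp only [hcdef]
    exact Finset.prod_Icc_succ_top (by omega) _
  have hc0 : c 0 = 1 := by simp [hcdef]
  have hd1 : d 1 ≠ 0 := hd0 1 le_rfl hN
  have hl1 : l 1 ≠ 0 := hl0 1 le_rfl hN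
  have hc1v : c 1 = -(l 1 * d 1) := by rw [hc 0, hc0, one_mul]
  -- the U / (-Q) case
  have hRU : ∀ j, j ≤ N - 1 → (-Q (j + 2)) = a j * (-Q (j + 1)) - Polynomial.C (b j) * (-Q j) := by
    intro j hj
    rw [hQrec j hj]; ring
  have hQ2 : Q 2 = Polynomial.C (b 0) := by
    rw [hQrec 0 (Nat.zero_le _), hQ1, hQ0]; ring
  have hU2 : U 2 = 1 := by
    have h : U 2 = U 0 - Polynomial.X * m 1 * U 1 := hUrec2 0 hN
    rw [h, hU0, hU1]; ring
  have hU3 : U 3 = Polynomial.C (l 1) := by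
    have h : U 3 = U 1 + Polynomial.C (l 1) * U 2 := hUrec1 1 le_rfl hN
    rw [h, hU1, hU2]; ring
  have base0U : U 1 = Polynomial.C (c 0) * (-Q 1) := by simp [hU1, hQ1, hc0]
  have base1U : 1 ≤ N → U 3 = Polynomial.C (c 1) * (-Q 2) := by
    intro _
    rw [hU3, hQ2, hb0]
    have hr : c 1 * -((d 1)⁻¹) = l 1 := by rw [hc1v]; field_simp
    rw [← hr, C_mul, C_neg]
  have keyU : ∀ j, j ≤ N → U (2 * j + 1) = Polynomial.C (c j) * (-Q (j + 1)) :=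
    stieltjes_aux N m l d hd0 hl0 b a hb ha c hc U (fun n => -Q n)
      hUrec1 hUrec2 hRU base0U base1U
  -- the V / P case
  have hV2 : V 2 = -(Polynomial.X * m 1) := by
    have h : V 2 = V 0 - Polynomial.X * m 1 * V 1 := hVrec2 0 hN
    rw [h, hV0, hV1]; ring
  have hV3 : V 3 = 1 - Polynomial.C (l 1) * (Polynomial.X * m 1) := by
    have h : V 3 = V 1 + Polynomial.C (l 1) * V 2 := hVrec1 1 le_rfl hN
    rw [h, hV1, hV2]; ring
  have hP2 : P 2 = a 0 := by
    rw [hPrec 0 (Nat.zero_le _), hP1, hP0]; ring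
  have base0V : V 1 = Polynomial.C (c 0) * P 1 := by simp [hV1, hP1, hc0]
  have base1V : 1 ≤ N → V 3 = Polynomial.C (c 1) * P 2 := by
    intro _
    rw [hV3, hP2, ha0]
    have hF1 : Polynomial.C (c 1) * Polynomial.C ((d 1)⁻¹) = -Polynomial.C (l 1) := by
      rw [← C_mul, show c 1 * (d 1)⁻¹ = -(l 1) from by rw [hc1v]; field_simp, C_neg]
    have hF2 : Polynomial.C (l 1) * Polynomial.C ((l 1)⁻¹) = 1 := by
      rw [← C_mul, mul_inv_cancel₀ hl1, C_1]
    linear_combination (-(Polynomial.X * m 1 - Polynomial.C ((l 1)⁻¹))) * hF1 - hF2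
  have keyV : ∀ j, j ≤ N → V (2 * j + 1) = Polynomial.C (c j) * P (j + 1) :=
    stieltjes_aux N m l d hd0 hl0 b a hb ha c hc V P hVrec1 hVrec2 hPrec base0V base1V
  -- conclusion
  intro j hj1 hjN
  have hcj : c j ≠ 0 := by
    simp only [hcdef]
    refine Finset.prod_ne_zero_iff.mpr ?_
    intro i hi
    simp only [Finset.mem_Icc] at hi
    exact neg_ne_zero.mpr (mul_ne_zero (hl0 i hi.1 (hi.2.trans hjN)) (hd0 i hi.1 (hi.2.trans hjN)))
  rw [keyU j hjN, keyV j hjN, map_mul, map_mul]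
  have hCne : (algebraMap (Polynomial ℝ) (RatFunc ℝ)) (Polynomial.C (c j)) ≠ 0 :=
    RatFunc.algebraMap_ne_zero (Polynomial.C_ne_zero.mpr hcj)
  rw [mul_div_mul_left _ _ hCne, map_neg, neg_div]

end
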